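/- Let (φ_λ)_{λ∈Λ}, with Λ finite, be an orthonormal basis of ℝ^n, let Y ∈ ℝ^n, let q_λ > 0 for each λ ∈ Λ, and let r ∈ (0, ∞). Define the data-dependent weights w_λ = q_λ² / max{q_λ, |⟨φ_λ, Y⟩|}. Then the nonnegative garrote estimator β̂^JS = Σ_{λ∈Λ} η^JS(⟨φ_λ, Y⟩, q_λ) φ_λ is the unique solution of: minimize Σ_{λ∈Λ} |⟨φ_λ, β⟩|^r over β ∈ ℝ^n subject to max_{λ∈Λ} |⟨φ_λ, Y − β⟩| / w_λ ≤ 1. -/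

import Mathlib

noncomputable def etaJS (x q : ℝ) : ℝ := x * max (1 - q ^ 2 / x ^ 2) 0

lemma etaJS_eq_zero {x q : ℝ} (h : |x| ≤ q) : etaJS x q = 0 := by
  rcases eq_or_ne x 0 with h0 | h0
  · simp [etaJS, h0]
  · have hx2 : 0 < x ^ 2 := by positivity
    have hle : x ^ 2 ≤ q ^ 2 := by nlinarith [sq_abs x, abs_nonneg x]
    have h1 : 1 - q ^ 2 / x ^ 2 ≤ 0 := by
      rw [sub_nonpos, le_div_iff₀ hx2]; linarith
    simp [etaJS, max_eq_right h1]

lemma etaJS_eq {x q : ℝ} (hq : 0 < q) (h : q < |x|) : etaJS x q = x - q ^ 2 / x := by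
  have hx : x ≠ 0 := by
    intro h0; rw [h0] at h; simp at h; linarith
  have hx2 : 0 < x ^ 2 := by positivity
  have hlt : q ^ 2 < x ^ 2 := by nlinarith [sq_abs x, abs_nonneg x]
  have h1 : 0 ≤ 1 - q ^ 2 / x ^ 2 := by
    rw [sub_nonneg, div_le_one hx2]; linarith
  rw [etaJS, max_eq_left h1]
  field_simp

lemma key_feas {x q : ℝ} (hq : 0 < q) :
    |x - etaJS x q| ≤ q ^ 2 / max q |x| := by
  rcases le_or_gt |x| q with h | h
  · rw [etaJS_eq_zero h, sub_zero, max_eq_left h]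
    rw [pow_two, mul_div_assoc, div_self hq.ne', mul_one]
    exact h
  · rw [etaJS_eq hq h, max_eq_right h.le]
    have : x - (x - q ^ 2 / x) = q ^ 2 / x := by ring
    rw [this, abs_div, abs_pow, abs_of_pos hq]

lemma key_min {x q b : ℝ} (hq : 0 < q) (hb : |x - b| ≤ q ^ 2 / max q |x|)
    (hne : b ≠ etaJS x q) : |etaJS x q| < |b| := by
  rcases le_or_gt |x| q with h | h
  · rw [etaJS_eq_zero h] at hne ⊢
    simpa using hne
  · have hx : x ≠ 0 := by
      intro h0; rw [h0] at h; simp at h; linarith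
    rw [max_eq_right h.le] at hb
    rw [etaJS_eq hq h] at hne ⊢
    have hlt : q ^ 2 < x ^ 2 := by nlinarith [sq_abs x, abs_nonneg x]
    rcases hx.lt_or_gt with hneg | hpos
    · have hax : |x| = -x := abs_of_neg hneg
      rw [hax] at hb
      have h1 : -(q ^ 2 / -x) ≤ x - b := (abs_le.mp hb).1
      rw [div_neg, neg_neg] at h1
      have hble : b ≤ x - q ^ 2 / x := by linarith
      have helt : x - q ^ 2 / x < 0 := by
        rw [sub_neg, lt_div_iff_of_neg hneg]
        nlinarith
      have hblt : b < x - q ^ 2 / x := lt_of_le_of_ne hble hne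
      rw [abs_of_neg helt, abs_of_neg (hblt.trans helt)]
      linarith
    · have hax : |x| = x := abs_of_pos hpos
      rw [hax] at hb
      have h1 : x - b ≤ q ^ 2 / x := (abs_le.mp hb).2
      have hble : x - q ^ 2 / x ≤ b := by linarith
      have hegt : 0 < x - q ^ 2 / x := by
        rw [sub_pos, div_lt_iff₀ hpos]
        nlinarith
      have hblt : x - q ^ 2 / x < b := lt_of_le_of_ne hble (Ne.symm hne)
      rw [abs_of_pos hegt, abs_of_pos (hegt.trans hblt)]
      linarith

theorem nonnegative_garrote_variational {n : ℕ} {Λ : Type*} [Fintype Λ]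
    (φ : OrthonormalBasis Λ ℝ (EuclideanSpace ℝ (Fin n)))
    (Y : EuclideanSpace ℝ (Fin n)) (q : Λ → ℝ) (hq : ∀ l, 0 < q l)
    (r : ℝ) (hr : 0 < r)
    (w : Λ → ℝ)
    (hw : ∀ l : Λ, w l = q l ^ 2 / max (q l) |(inner ℝ (φ l) Y : ℝ)|)
    (βhat : EuclideanSpace ℝ (Fin n))
    (hβhat : βhat = ∑ l : Λ, etaJS (inner ℝ (φ l) Y : ℝ) (q l) • φ l) :
    (∀ l : Λ, |(inner ℝ (φ l) (Y - βhat) : ℝ)| / w l ≤ 1) ∧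
    ∀ β : EuclideanSpace ℝ (Fin n),
      (∀ l : Λ, |(inner ℝ (φ l) (Y - β) : ℝ)| / w l ≤ 1) → β ≠ βhat →
      (∑ l : Λ, |(inner ℝ (φ l) βhat : ℝ)| ^ r) < ∑ l : Λ, |(inner ℝ (φ l) β : ℝ)| ^ r := by
  have hwpos : ∀ l, 0 < w l := by
    intro l
    rw [hw l]
    have hm : 0 < max (q l) |(inner ℝ (φ l) Y : ℝ)| :=
      lt_of_lt_of_le (hq l) (le_max_left _ _)
    exact div_pos (pow_pos (hq l) 2) hm
  have hcoef : ∀ l : Λ, (inner ℝ (φ l) βhat : ℝ) = etaJS (inner ℝ (φ l) Y : ℝ) (q l) := by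
    intro l
    rw [hβhat]
    exact φ.orthonormal.inner_right_fintype _ l
  have hsub : ∀ (β : EuclideanSpace ℝ (Fin n)) (l : Λ),
      (inner ℝ (φ l) (Y - β) : ℝ) = (inner ℝ (φ l) Y : ℝ) - (inner ℝ (φ l) β : ℝ) :=
    fun β l => inner_sub_right _ _ _
  constructor
  · intro l
    rw [div_le_one (hwpos l), hsub, hcoef l, hw l]
    exact key_feas (hq l)
  · intro β hβ hne
    have hb : ∀ l, |(inner ℝ (φ l) Y : ℝ) - (inner ℝ (φ l) β : ℝ)| ≤
        q l ^ 2 / max (q l) |(inner ℝ (φ l) Y : ℝ)| := by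
      intro l
      have h1 := (div_le_one (hwpos l)).mp (hβ l)
      rwa [hsub, hw l] at h1
    have hex : ∃ l, (inner ℝ (φ l) β : ℝ) ≠ etaJS (inner ℝ (φ l) Y : ℝ) (q l) := by
      by_contra hcon
      push_neg at hcon
      apply hne
      apply φ.repr.injective
      refine PiLp.ext fun l => ?_
      rw [φ.repr_apply_apply, φ.repr_apply_apply, hcon l, hcoef l]
    obtain ⟨l0, hl0⟩ := hex
    apply Finset.sum_lt_sum
    · intro i _
      rw [hcoef i]
      rcases eq_or_ne ((inner ℝ (φ i) β : ℝ)) (etaJS (inner ℝ (φ i) Y : ℝ) (q i)) with he | he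
      · rw [he]
      · exact Real.rpow_le_rpow (abs_nonneg _) (key_min (hq i) (hb i) he).le hr.le
    · refine ⟨l0, Finset.mem_univ l0, ?_⟩
      rw [hcoef l0]
      exact Real.rpow_lt_rpow (abs_nonneg _) (key_min (hq l0) (hb l0) hl0) hr
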